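/- For λ ∈ ℂ \ {0, 1}, let π_λ be the system of subspaces of V = ℂ⁴ with basis e₁, e₂, e₃, e₄ consisting of the chain V₁ = span{e₁} ⊆ V₂ = span{e₁, e₂} ⊆ V₃ = span{e₁, e₂, e₃}, the chain V₄ = span{e₄} ⊆ V₅ = span{e₃, e₄} ⊆ V₆ = span{e₂, e₃, e₄}, and the single subspace V₇ = span{e₁+e₂+e₃, λe₁+e₃+e₄} (so π_λ is a representation of the primitive poset that is the disjoint sum of two 3-element chains and one singleton). Then each π_λ is indecomposable, and for λ ≠ μ (both in ℂ \ {0,1}) the representations π_λ and π_μ are not isomorphic; in particular this poset has infinitely many pairwise non-isomorphic indecomposable representations. -/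

import Mathlib

noncomputable section

/-- A system of subspaces `A : ι → Submodule ℂ V` is decomposable if the ambient space
splits as a direct sum of two nonzero subspaces compatible with every member of the system
(internal reformulation of being isomorphic to a direct sum of two representations with
nonzero ambient spaces). -/
def IsDecomposableSystem {ι V : Type*} [AddCommGroup V] [Module ℂ V]
    (A : ι → Submodule ℂ V) : Prop :=
  ∃ U W : Submodule ℂ V, IsCompl U W ∧ U ≠ ⊥ ∧ W ≠ ⊥ ∧
    ∀ i, A i = A i ⊓ U ⊔ A i ⊓ W

/-- A system of subspaces is indecomposable if the ambient space is nonzero and the system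
is not decomposable. -/
def IsIndecomposableSystem {ι V : Type*} [AddCommGroup V] [Module ℂ V]
    (A : ι → Submodule ℂ V) : Prop :=
  (∃ v : V, v ≠ 0) ∧ ¬ IsDecomposableSystem A

/-- Two systems of subspaces are isomorphic if there is an invertible linear map carrying
each member of the first system onto the corresponding member of the second. -/
def RepIso {ι V W : Type*} [AddCommGroup V] [Module ℂ V] [AddCommGroup W] [Module ℂ W]
    (A : ι → Submodule ℂ V) (B : ι → Submodule ℂ W) : Prop :=
  ∃ C : V ≃ₗ[ℂ] W, ∀ i, (A i).map (C : V →ₗ[ℂ] W) = B i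

/-- The representation `π_λ` of the primitive poset `(3,3,1)` in `ℂ⁴`: the chains
`V₁ = span{e₁} ⊆ V₂ = span{e₁,e₂} ⊆ V₃ = span{e₁,e₂,e₃}`,
`V₄ = span{e₄} ⊆ V₅ = span{e₃,e₄} ⊆ V₆ = span{e₂,e₃,e₄}`, and the single subspace
`V₇ = span{e₁+e₂+e₃, λe₁+e₃+e₄}` (indices `0,…,6` for `V₁,…,V₇`). -/
def piRep (lam : ℂ) : Fin 7 → Submodule ℂ (Fin 4 → ℂ) :=
  ![Submodule.span ℂ {![1, 0, 0, 0]},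
    Submodule.span ℂ {![1, 0, 0, 0], ![0, 1, 0, 0]},
    Submodule.span ℂ {![1, 0, 0, 0], ![0, 1, 0, 0], ![0, 0, 1, 0]},
    Submodule.span ℂ {![0, 0, 0, 1]},
    Submodule.span ℂ {![0, 0, 1, 0], ![0, 0, 0, 1]},
    Submodule.span ℂ {![0, 1, 0, 0], ![0, 0, 1, 0], ![0, 0, 0, 1]},
    Submodule.span ℂ {![1, 1, 1, 0], ![lam, 0, 1, 1]}]

lemma mem_span_triple' {M : Type*} [AddCommGroup M] [Module ℂ M] {x y z w : M} :
    w ∈ Submodule.span ℂ {x, y, z} ↔ ∃ a b c : ℂ, a • x + b • y + c • z = w := by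
  constructor
  · intro h
    rw [Submodule.mem_span_insert] at h
    obtain ⟨a, w', hw', rfl⟩ := h
    rw [Submodule.mem_span_pair] at hw'
    obtain ⟨b, c, rfl⟩ := hw'
    exact ⟨a, b, c, by abel⟩
  · rintro ⟨a, b, c, rfl⟩
    rw [Submodule.mem_span_insert]
    exact ⟨a, b • y + c • z, Submodule.mem_span_pair.2 ⟨b, c, rfl⟩, by abel⟩

lemma key (lam mu : ℂ)
    (P : (Fin 4 → ℂ) →ₗ[ℂ] (Fin 4 → ℂ))
    (hP : ∀ i, ∀ v ∈ piRep lam i, P v ∈ piRep mu i) :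
    ∃ a : ℂ, (∀ v, P v = a • v) ∧ mu * a = lam * a := by
  -- P e1
  have h0 := hP 0 ![1,0,0,0] (Submodule.subset_span rfl)
  rw [show piRep mu 0 = Submodule.span ℂ {![1,0,0,0]} from rfl,
    Submodule.mem_span_singleton] at h0
  obtain ⟨a, ha⟩ := h0
  -- P e2
  have h1 := hP 1 ![0,1,0,0] (Submodule.subset_span (by right; rfl))
  rw [show piRep mu 1 = Submodule.span ℂ {![1,0,0,0], ![0,1,0,0]} from rfl,
    Submodule.mem_span_pair] at h1
  obtain ⟨b, c, hbc⟩ := h1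
  have h5 := hP 5 ![0,1,0,0] (Submodule.subset_span (by left; rfl))
  rw [show piRep mu 5 = Submodule.span ℂ {![0,1,0,0], ![0,0,1,0], ![0,0,0,1]} from rfl,
    mem_span_triple'] at h5
  obtain ⟨x, y, z, hxyz⟩ := h5
  have hb : b = 0 := by
    have e1 := congrFun hbc 0
    have e2 := congrFun hxyz 0
    simp at e1 e2
    rw [← e1] at e2; exact e2.symm
  rw [hb] at hbc
  -- P e3
  have h4 := hP 4 ![0,0,1,0] (Submodule.subset_span (by left; rfl))
  rw [show piRep mu 4 = Submodule.span ℂ {![0,0,1,0], ![0,0,0,1]} from rfl,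
    Submodule.mem_span_pair] at h4
  obtain ⟨d, f, hdf⟩ := h4
  have h2 := hP 2 ![0,0,1,0] (Submodule.subset_span (by right; right; rfl))
  rw [show piRep mu 2 = Submodule.span ℂ {![1,0,0,0], ![0,1,0,0], ![0,0,1,0]} from rfl,
    mem_span_triple'] at h2
  obtain ⟨x2, y2, z2, hx2⟩ := h2
  have hf : f = 0 := by
    have e1 := congrFun hdf 3
    have e2 := congrFun hx2 3
    simp at e1 e2
    rw [← e1] at e2; exact e2.symm
  rw [hf] at hdf
  -- P e4
  have h3 := hP 3 ![0,0,0,1] (Submodule.subset_span rfl)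
  rw [show piRep mu 3 = Submodule.span ℂ {![0,0,0,1]} from rfl,
    Submodule.mem_span_singleton] at h3
  obtain ⟨g, hg⟩ := h3
  -- the two V7 generators
  have h6a := hP 6 ![1,1,1,0] (Submodule.subset_span (by left; rfl))
  have h6b := hP 6 ![lam,0,1,1] (Submodule.subset_span (by right; rfl))
  rw [show piRep mu 6 = Submodule.span ℂ {![1,1,1,0], ![mu,0,1,1]} from rfl,
    Submodule.mem_span_pair] at h6a h6b
  obtain ⟨p, q, hpq⟩ := h6a
  obtain ⟨r, s, hrs⟩ := h6b
  -- decompose the generators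
  have hv1 : (![1,1,1,0] : Fin 4 → ℂ) = ![1,0,0,0] + ![0,1,0,0] + ![0,0,1,0] := by
    funext i; fin_cases i <;> simp
  have hv2 : (![lam,0,1,1] : Fin 4 → ℂ) = lam • ![1,0,0,0] + ![0,0,1,0] + ![0,0,0,1] := by
    funext i; fin_cases i <;> simp
  rw [hv1, map_add, map_add] at hpq
  rw [hv2, map_add, map_add, map_smul] at hrs
  rw [← ha, ← hbc, ← hdf] at hpq
  rw [← ha, ← hdf, ← hg] at hrs
  have p0 := congrFun hpq 0
  have p1 := congrFun hpq 1
  have p2 := congrFun hpq 2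
  have p3 := congrFun hpq 3
  have r0 := congrFun hrs 0
  have r1 := congrFun hrs 1
  have r2 := congrFun hrs 2
  have r3 := congrFun hrs 3
  simp at p0 p1 p2 p3 r0 r1 r2 r3
  -- from p3 : q = 0 ; p0: p + q*mu = a; p1: p = c; p2: p + q = d  => a = c = d
  -- from r1 : r = 0 ; r0: r + s*mu = lam*a; r2: r + s = d; r3: s = g => g = d, mu*g = lam*a
  have hca : c = a := by linear_combination p0 - p1 - mu * p3
  have hda : d = a := by linear_combination p0 - p2 + (1 - mu) * p3
  have hgd : g = d := by linear_combination r2 - r1 - r3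
  have hmu : mu * a = lam * a := by
    linear_combination r0 - r1 - mu * r3 - mu * hgd - mu * hda
  refine ⟨a, ?_, hmu⟩
  intro v
  have hv : v = v 0 • ![1,0,0,0] + v 1 • ![0,1,0,0] + v 2 • ![0,0,1,0] + v 3 • ![0,0,0,1] := by
    funext i; fin_cases i <;> simp
  rw [hv]
  simp only [map_add, map_smul]
  rw [← ha, ← hbc, ← hdf, ← hg, hca, hda, hgd, hda]
  funext i; fin_cases i <;> simp <;> ring

lemma e1_ne : (![1,0,0,0] : Fin 4 → ℂ) ≠ 0 := by
  intro h
  have := congrFun h 0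
  simp at this

lemma chain_incl (lam : ℂ) : piRep lam 0 ≤ piRep lam 1 ∧ piRep lam 1 ≤ piRep lam 2 ∧
    piRep lam 3 ≤ piRep lam 4 ∧ piRep lam 4 ≤ piRep lam 5 := by
  refine ⟨Submodule.span_mono ?_, Submodule.span_mono ?_,
    Submodule.span_mono ?_, Submodule.span_mono ?_⟩
  · exact Set.singleton_subset_iff.2 (by left; rfl)
  · exact Set.insert_subset_insert (Set.singleton_subset_iff.2 (Set.mem_insert _ _))
  · exact Set.singleton_subset_iff.2 (by right; rfl)
  · exact Set.subset_insert _ _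

lemma indec (lam : ℂ) : IsIndecomposableSystem (piRep lam) := by
  refine ⟨⟨![1,0,0,0], e1_ne⟩, ?_⟩
  rintro ⟨U, W, hcompl, hU, hW, hsum⟩
  set Q : (Fin 4 → ℂ) →ₗ[ℂ] (Fin 4 → ℂ) :=
    U.subtype ∘ₗ (U.projectionOnto W hcompl) with hQdef
  have hQU : ∀ u ∈ U, Q u = u := by
    intro u hu
    simp [hQdef, Submodule.projectionOnto_apply_left hcompl ⟨u, hu⟩]
  have hQW : ∀ w ∈ W, Q w = 0 := by
    intro w hw
    simp [hQdef, Submodule.projectionOnto_apply_right hcompl ⟨w, hw⟩]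
  have hQmem : ∀ v, Q v ∈ U := fun v => (U.projectionOnto W hcompl v).2
  have hQ : ∀ i, ∀ v ∈ piRep lam i, Q v ∈ piRep lam i := by
    intro i v hv
    rw [hsum i] at hv
    obtain ⟨u, hu, w, hw, rfl⟩ := Submodule.mem_sup.1 hv
    rw [map_add, hQU u hu.2, hQW w hw.2, add_zero]
    exact hu.1
  obtain ⟨a, hPa, -⟩ := key lam lam Q hQ
  have hidem : Q (Q ![1,0,0,0]) = Q ![1,0,0,0] := hQU _ (hQmem _)
  rw [hPa, hPa] at hidem
  have haa : a * a = a := by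
    have := congrFun hidem 0
    simpa [smul_smul] using this
  have : a = 0 ∨ a = 1 := by
    rcases mul_eq_zero.1 (show a * (a - 1) = 0 by ring_nf; linear_combination haa) with h | h
    · exact Or.inl h
    · exact Or.inr (by linear_combination h)
  rcases this with h0 | h1
  · apply hU
    rw [eq_bot_iff]
    intro u hu
    have := hQU u hu
    rw [hPa, h0, zero_smul] at this
    simp [← this]
  · apply hW
    rw [eq_bot_iff]
    intro w hw
    have := hQW w hw
    rw [hPa, h1, one_smul] at this
    simp [this]

lemma noniso {lam mu : ℂ} (hne : lam ≠ mu) : ¬ RepIso (piRep lam) (piRep mu) := by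
  rintro ⟨C, hC⟩
  have hP : ∀ i, ∀ v ∈ piRep lam i, C.toLinearMap v ∈ piRep mu i := by
    intro i v hv
    rw [← hC i]
    exact Submodule.mem_map_of_mem hv
  obtain ⟨a, hPa, hmu⟩ := key lam mu C.toLinearMap hP
  have ha : a ≠ 0 := by
    intro h
    apply e1_ne
    have : C ![1,0,0,0] = C 0 := by
      rw [map_zero]
      have := hPa ![1,0,0,0]
      simp only [LinearEquiv.coe_coe] at this
      rw [this, h, zero_smul]
    exact C.injective this
  exact hne (mul_right_cancel₀ ha hmu).symm


/-- Each `π_λ` (λ ≠ 0, 1) is a representation of the primitive poset which is the disjoint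
sum of two 3-element chains and one singleton, and is indecomposable; `π_λ ≇ π_μ` for
`λ ≠ μ`; in particular this poset has infinitely many pairwise non-isomorphic
indecomposable representations. -/
theorem poset331_infinite_family :
    (∀ lam : ℂ, piRep lam 0 ≤ piRep lam 1 ∧ piRep lam 1 ≤ piRep lam 2 ∧
      piRep lam 3 ≤ piRep lam 4 ∧ piRep lam 4 ≤ piRep lam 5) ∧
    (∀ lam : ℂ, lam ≠ 0 → lam ≠ 1 → IsIndecomposableSystem (piRep lam)) ∧
    (∀ lam mu : ℂ, lam ≠ 0 → lam ≠ 1 → mu ≠ 0 → mu ≠ 1 → lam ≠ mu →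
      ¬ RepIso (piRep lam) (piRep mu)) ∧
    (∃ f : ℕ → (Fin 7 → Submodule ℂ (Fin 4 → ℂ)),
      (∀ n, f n 0 ≤ f n 1 ∧ f n 1 ≤ f n 2 ∧ f n 3 ≤ f n 4 ∧ f n 4 ≤ f n 5) ∧
      (∀ n, IsIndecomposableSystem (f n)) ∧
      ∀ n m, n ≠ m → ¬ RepIso (f n) (f m)) := by
  refine ⟨chain_incl, fun lam _ _ => indec lam, fun lam mu _ _ _ _ h => noniso h, ?_⟩
  refine ⟨fun n => piRep ((n : ℂ) + 2), fun n => chain_incl _, fun n => indec _, ?_⟩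
  intro n m hnm
  apply noniso
  intro h
  apply hnm
  exact_mod_cast add_right_cancel h
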